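/- Let μ^*(E^i_j) = X^i_l Y^l_j - X^l_j Y^i_l - A^a_j B^i_a be the quantum moment map operators acting on polynomials in variables X^i_j and A^a_i (where Y^i_j = ∂/∂X^j_i and B^i_a = ∂/∂A^a_i). Then on the subspace of polynomials f satisfying (μ^*(E^i_j) + k δ^i_j) f = 0 for all i,j, the operator Tr(X^m)·(k·Id) equals the operator ρ(1 ⊗ z^m) := A^a_i (X^m)^i_j ∂/∂A^a_j. That is, k·Tr(X^m) = Σ_a A^a (X^m) B_a as operators on the constrained subspace. -/
import Mathlib

open MvPolynomial

section Aux
variable {R : Type*} [CommRing R] {ι κ : Type*} [Fintype ι] [Fintype κ]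

lemma aux1 (M P : Matrix ι ι R) (D : ι → ι → R) :
    ∑ i, ∑ j, M j i * ∑ l, P i l * D j l = ∑ j, ∑ l, (M * P) j l * D j l := by
  simp only [Finset.mul_sum, Matrix.mul_apply, Finset.sum_mul]
  rw [Finset.sum_comm]
  refine Finset.sum_congr rfl fun j _ => ?_
  rw [Finset.sum_comm]
  exact Finset.sum_congr rfl fun l _ => Finset.sum_congr rfl fun i _ => by ring

lemma aux2 (M P : Matrix ι ι R) (D : ι → ι → R) :
    ∑ i, ∑ j, M j i * ∑ l, P l j * D l i = ∑ l, ∑ i, (P * M) l i * D l i := by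
  simp only [Finset.mul_sum, Matrix.mul_apply, Finset.sum_mul]
  refine Eq.trans (Finset.sum_congr rfl fun i _ => Finset.sum_comm) ?_
  rw [Finset.sum_comm]
  exact Finset.sum_congr rfl fun l _ => Finset.sum_congr rfl fun i _ =>
    Finset.sum_congr rfl fun j _ => by ring

lemma aux3 (M : Matrix ι ι R) (A E : κ → ι → R) :
    ∑ i, ∑ j, M j i * ∑ a : κ, A a j * E a i
      = ∑ a : κ, ∑ j, ∑ i, A a j * M j i * E a i := by
  simp only [Finset.mul_sum]
  refine Eq.trans (Finset.sum_congr rfl fun i _ => Finset.sum_comm) ?_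
  rw [Finset.sum_comm]
  refine Eq.trans (Finset.sum_congr rfl fun a _ => Finset.sum_comm) ?_
  exact Finset.sum_congr rfl fun a _ => Finset.sum_congr rfl fun j _ =>
    Finset.sum_congr rfl fun i _ => by ring

lemma aux4 [DecidableEq ι] (M : Matrix ι ι R) (c f : R) :
    ∑ i, ∑ j, M j i * (c * (if i = j then f else 0)) = c * (Matrix.trace M * f) := by
  simp only [mul_ite, mul_zero, Finset.sum_ite_eq, Finset.mem_univ, if_true,
    Matrix.trace, Matrix.diag, Finset.sum_mul]
  rw [Finset.mul_sum]
  exact Finset.sum_congr rfl fun i _ => by ring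

end Aux

/-- On the subspace of polynomials `f` in the variables `X^i_j, A^a_i`
killed by the shifted quantum moment map `μ^*(E^i_j) + k δ^i_j` (where
`μ^*(E^i_j) = X^i_l Y^l_j - X^l_j Y^i_l - A^a_j B^i_a`, `Y^i_j = ∂/∂X^j_i`,
`B^i_a = ∂/∂A^a_i`), the operator `k·Tr(X^m)` (multiplication) agrees with
`ρ(1 ⊗ z^m) = A^a_i (X^m)^i_j ∂/∂A^a_j`. -/
theorem statement3 (N n : ℕ) (k : ℤ) (m : ℕ)
    (f : MvPolynomial ((Fin N × Fin N) ⊕ (Fin n × Fin N)) ℂ)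
    (hf : ∀ i j : Fin N,
      (∑ l, X (Sum.inl (i, l)) * pderiv (Sum.inl (j, l)) f)
        - (∑ l, X (Sum.inl (l, j)) * pderiv (Sum.inl (l, i)) f)
        - (∑ a : Fin n, X (Sum.inr (a, j)) * pderiv (Sum.inr (a, i)) f)
        + (k : ℂ) • (if i = j then f else 0) = 0) :
    (k : ℂ) •
        (Matrix.trace ((Matrix.of fun i j : Fin N => X (Sum.inl (i, j))) ^ m) * f)
      = ∑ a : Fin n, ∑ i, ∑ j,
          X (Sum.inr (a, i)) *
            ((Matrix.of fun p q : Fin N => X (Sum.inl (p, q))) ^ m) i j *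
            pderiv (Sum.inr (a, j)) f := by
  classical
  set P : Matrix (Fin N) (Fin N) (MvPolynomial ((Fin N × Fin N) ⊕ (Fin n × Fin N)) ℂ) :=
    Matrix.of fun p q => X (Sum.inl (p, q)) with hP
  set M := P ^ m with hM
  have key : ∑ i, ∑ j, M j i *
      ((∑ l, X (Sum.inl (i, l)) * pderiv (Sum.inl (j, l)) f)
        - (∑ l, X (Sum.inl (l, j)) * pderiv (Sum.inl (l, i)) f)
        - (∑ a : Fin n, X (Sum.inr (a, j)) * pderiv (Sum.inr (a, i)) f)
        + (k : ℂ) • (if i = j then f else 0)) = 0 := by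
    simp only [hf, mul_zero, Finset.sum_const_zero]
  simp only [mul_sub, mul_add, Finset.sum_sub_distrib, Finset.sum_add_distrib] at key
  have hPX : ∀ i l : Fin N, X (Sum.inl (i, l)) = P i l := fun i l => rfl
  simp only [hPX] at key
  rw [aux1 M P, aux2 M P, aux3 M (fun a j => X (Sum.inr (a, j)))
    (fun a i => pderiv (Sum.inr (a, i)) f)] at key
  have hcomm : M * P = P * M := by rw [hM, ← pow_succ, ← pow_succ']
  rw [hcomm] at key
  have h12 : ∑ j, ∑ l, (P * M) j l * pderiv (Sum.inl (j, l)) f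
      = ∑ l, ∑ i, (P * M) l i * pderiv (Sum.inl (l, i)) f := rfl
  rw [h12, sub_self, zero_sub, neg_add_eq_zero] at key
  have hsm : ∀ (g : MvPolynomial ((Fin N × Fin N) ⊕ (Fin n × Fin N)) ℂ),
      (k : ℂ) • g = C (k : ℂ) * g := fun g => smul_eq_C_mul g _
  rw [hsm, ← aux4 M (C (k : ℂ)) f]
  simp only [hsm] at key
  rw [key]
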